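/- A FIFO queue object over a domain with two distinct values v₀ ≠ v₁, initially empty, is doubly-perturbing, witnessed by the dequeue operation: after the history Enq_p(v₀) ∘ Enq_p(v₁), Deq_p is perturbing with respect to Deq_q; and extending further by Enq_q(v₀) ∘ Enq_q(v₁) yields a history H₂ after which Deq_p is again perturbing with respect to Deq_q. -/
import Mathlib

/-- Operations of a FIFO queue over value domain `V`. -/
inductive QOp (V : Type) : Type
  | enq (v : V)
  | deq

def qStep {V : Type} : QOp V → List V → List V
  | .enq v, s => s ++ [v]
  | .deq, s => s.tail

/-- `enq` returns an ack (`none`); `deq` returns the first element, or the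
special empty response `some none` when the queue is empty. -/
def qResp {V : Type} : QOp V → List V → Option (Option V)
  | .enq _, _ => none
  | .deq, s => some s.head?

def qRun {V : Type} (H : List (QOp V)) : List V :=
  H.foldl (fun s op => qStep op s) []

def qPerturbing {V : Type} (opp opq : QOp V) (H : List (QOp V)) : Prop :=
  qResp opq (qRun (H ++ [opp])) ≠ qResp opq (qRun H)

/-- A FIFO queue with two distinct values, initially empty, is
doubly-perturbing, witnessed by dequeue: after `Enq_p(v₀) ∘ Enq_p(v₁)`,
`Deq_p` is perturbing w.r.t. `Deq_q`; and after further extending by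
`Deq_p ∘ Deq_q ∘ Enq_q(v₀) ∘ Enq_q(v₁)`, `Deq_p` is again perturbing
w.r.t. `Deq_q`. -/
theorem stmt6 {V : Type} (v0 v1 : V) (h : v0 ≠ v1) :
    qPerturbing QOp.deq QOp.deq [QOp.enq v0, QOp.enq v1] ∧
    qPerturbing QOp.deq QOp.deq
      [QOp.enq v0, QOp.enq v1, QOp.deq, QOp.deq, QOp.enq v0, QOp.enq v1] := by
  constructor <;>
    simp [qPerturbing, qRun, qStep, qResp] <;>
    exact fun hc => h hc.symm
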